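/- For all n ≥ 6 there exists a primitive uniquely K_{n-1}^{(n-2)}-saturated hypergraph on n vertices. Equivalently, for all n ≥ 6 there exists a simple graph on n vertices with no isolated vertices in which every edge has exactly one endpoint of degree 1 and no vertex is an endpoint of every edge (a disjoint union of at least two stars, each with at least two edges). -/

import Mathlib

open Finset

/-- The edge set `E` is `k`-uniform. -/
def Uniform (n k : ℕ) (E : Finset (Finset (Fin n))) : Prop :=
  ∀ e ∈ E, e.card = k

/-- `H` contains a copy of the complete `k`-uniform hypergraph on `r` vertices. -/
def HasClique (n k r : ℕ) (E : Finset (Finset (Fin n))) : Prop :=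
  ∃ Q : Finset (Fin n), Q.card = r ∧ ∀ T ⊆ Q, T.card = k → T ∈ E

/-- `H` is uniquely `K_r^(k)`-saturated: it has no `K_r^(k)`, and adding any
non-edge `k`-set `S` creates exactly one copy of `K_r^(k)`. -/
def UniquelySat (n k r : ℕ) (E : Finset (Finset (Fin n))) : Prop :=
  ¬ HasClique n k r E ∧
  ∀ S : Finset (Fin n), S.card = k → S ∉ E →
    ∃! Q : Finset (Fin n), Q.card = r ∧ ∀ T ⊆ Q, T.card = k → (T ∈ E ∨ T = S)

/-- `H` has no dominating vertex. -/
def Primitive (n k : ℕ) (E : Finset (Finset (Fin n))) : Prop :=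
  ¬ ∃ v : Fin n, ∀ S : Finset (Fin n), S.card = k → v ∈ S → S ∈ E

/-- `H` is a primitive uniquely `K_r^(k)`-saturated `k`-uniform hypergraph. -/
def IsPUS (n k r : ℕ) (E : Finset (Finset (Fin n))) : Prop :=
  Uniform n k E ∧ UniquelySat n k r E ∧ Primitive n k E

/- ### Auxiliary: a two-star forest on `ℕ` -/

/-- Adjacency: star with center `0` and leaves `1,2`; star with center `3` and leaves `≥ 4`. -/
def nadj (x y : ℕ) : Prop :=
  (x = 0 ∧ (y = 1 ∨ y = 2)) ∨ (x = 3 ∧ 4 ≤ y) ∨ (y = 0 ∧ (x = 1 ∨ x = 2)) ∨ (y = 3 ∧ 4 ≤ x)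

def nleaf (x : ℕ) : Prop := x = 1 ∨ x = 2 ∨ 4 ≤ x

lemma nadj_comm {x y : ℕ} (h : nadj x y) : nadj y x := by unfold nadj at *; omega
lemma nadj_ne {x y : ℕ} (h : nadj x y) : x ≠ y := by unfold nadj at h; omega
lemma nadj_leaf_iff {x y : ℕ} (h : nadj x y) : nleaf x ↔ ¬ nleaf y := by
  unfold nadj at h; unfold nleaf; omega
lemma leaf_unique {x y z : ℕ} (hl : nleaf x) (h1 : nadj x y) (h2 : nadj x z) : y = z := by
  unfold nadj at *; unfold nleaf at hl; omega
lemma exists_nbr {n x : ℕ} (hn : 6 ≤ n) (hx : x < n) : ∃ z, z < n ∧ nadj x z := by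
  rcases show x = 0 ∨ x = 1 ∨ x = 2 ∨ x = 3 ∨ 4 ≤ x by omega with h|h|h|h|h
  · exact ⟨1, by omega, by unfold nadj; omega⟩
  · exact ⟨0, by omega, by unfold nadj; omega⟩
  · exact ⟨0, by omega, by unfold nadj; omega⟩
  · exact ⟨4, by omega, by unfold nadj; omega⟩
  · exact ⟨3, by omega, by unfold nadj; omega⟩
lemma center_two {n x y : ℕ} (hn : 6 ≤ n) (hx : x < n) (h : nadj x y) (hl : nleaf x) :
    ∃ z, z < n ∧ z ≠ x ∧ nadj y z := by
  have hy : y = 0 ∨ y = 3 := by unfold nadj at h; unfold nleaf at hl; omega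
  unfold nleaf at hl
  rcases hy with rfl|rfl
  · refine ⟨if x = 1 then 2 else 1, by split <;> omega, by split <;> omega, ?_⟩
    unfold nadj at h ⊢; split <;> omega
  · refine ⟨if x = 4 then 5 else 4, by split <;> omega, by split <;> omega, ?_⟩
    unfold nadj at h ⊢; split <;> omega

/- ### Complement gymnastics on `Fin n` -/

lemma Qcompl {n : ℕ} {Q : Finset (Fin n)} (h1 : 1 ≤ n) (hQ : Q.card = n - 1) :
    ∃ u : Fin n, Q = {u}ᶜ := by
  have h : Qᶜ.card = 1 := by
    rw [card_compl, Fintype.card_fin, hQ]; omega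
  obtain ⟨u, hu⟩ := card_eq_one.mp h
  exact ⟨u, by rw [← compl_compl Q, hu]⟩

lemma Tcompl {n : ℕ} {T : Finset (Fin n)} {a : Fin n} (hn : 2 ≤ n) (hT : T.card = n - 2)
    (ha : a ∉ T) : ∃ w, w ≠ a ∧ T = ({a, w} : Finset (Fin n))ᶜ := by
  have h2 : Tᶜ.card = 2 := by
    rw [card_compl, Fintype.card_fin, hT]; omega
  obtain ⟨c, d, hcd, h⟩ := card_eq_two.mp h2
  have haT : a ∈ Tᶜ := mem_compl.mpr ha
  rw [h, mem_insert, mem_singleton] at haT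
  rcases haT with rfl|rfl
  · exact ⟨d, fun e => hcd e.symm, by rw [← compl_compl T, h]⟩
  · exact ⟨c, hcd, by rw [← compl_compl T, h, pair_comm]⟩

lemma pair_compl_card {n : ℕ} {a b : Fin n} (hab : a ≠ b) :
    (({a, b} : Finset (Fin n))ᶜ).card = n - 2 := by
  rw [card_compl, Fintype.card_fin, card_pair hab]

open scoped Classical in
/-- The hypergraph: complements of non-edges of the two-star forest. -/
noncomputable def Ehyp (n : ℕ) : Finset (Finset (Fin n)) :=
  (univ.powersetCard (n - 2)).filter
    (fun S => ∀ a ∈ Sᶜ, ∀ b ∈ Sᶜ, ¬ nadj (a : Fin n).val (b : Fin n).val)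

lemma mem_Ehyp {n : ℕ} {S : Finset (Fin n)} :
    S ∈ Ehyp n ↔ S.card = n - 2 ∧ ∀ a ∈ Sᶜ, ∀ b ∈ Sᶜ, ¬ nadj a.val b.val := by
  classical
  simp [Ehyp, Finset.mem_filter, Finset.mem_powersetCard_univ]

lemma pair_compl_mem_Ehyp {n : ℕ} (hn : 6 ≤ n) {a b : Fin n} (hab : a ≠ b)
    (h : ¬ nadj a.val b.val) : ({a, b} : Finset (Fin n))ᶜ ∈ Ehyp n := by
  rw [mem_Ehyp]
  refine ⟨pair_compl_card hab, ?_⟩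
  intro c hc d hd
  rw [compl_compl, mem_insert, mem_singleton] at hc hd
  rcases hc with rfl|rfl <;> rcases hd with rfl|rfl
  · exact fun e => nadj_ne e rfl
  · exact h
  · exact fun e => h (nadj_comm e)
  · exact fun e => nadj_ne e rfl

theorem stmt4 (n : ℕ) (hn : 6 ≤ n) :
    (∃ E : Finset (Finset (Fin n)), IsPUS n (n - 2) (n - 1) E) ∧
    (∃ G : SimpleGraph (Fin n),
      (∀ v : Fin n, ∃ w, G.Adj v w) ∧
      (∀ v w : Fin n, G.Adj v w → ((∃! u, G.Adj v u) ↔ ¬ (∃! u, G.Adj w u))) ∧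
      (¬ ∃ v : Fin n, ∀ e ∈ G.edgeSet, v ∈ e)) := by
  classical
  have h2n : 2 ≤ n := by omega
  -- clique characterization helper: a set Q = {u}ᶜ whose pair-complements behave
  constructor
  · -- hypergraph part
    refine ⟨Ehyp n, ?_, ⟨?_, ?_⟩, ?_⟩
    · -- Uniform
      intro e he
      exact (mem_Ehyp.mp he).1
    · -- no clique
      rintro ⟨Q, hQ, hall⟩
      obtain ⟨u, rfl⟩ := Qcompl (by omega) hQ
      obtain ⟨z, hz, hadj⟩ := exists_nbr hn u.isLt
      set w : Fin n := ⟨z, hz⟩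
      have hwu : w ≠ u := by
        intro e
        exact nadj_ne (nadj_comm hadj) (congrArg Fin.val e)
      have hsub : ({u, w} : Finset (Fin n))ᶜ ⊆ {u}ᶜ := by
        intro x hx
        rw [mem_compl] at hx ⊢
        simp only [mem_insert, mem_singleton] at hx
        simp only [mem_singleton]
        tauto
      have hT := hall _ hsub (pair_compl_card (Ne.symm hwu))
      rw [mem_Ehyp] at hT
      refine hT.2 u ?_ w ?_ hadj <;>
        · rw [compl_compl]; simp
    · -- unique saturation
      intro S hS hSE
      -- S's complement is an adjacent pair {a,b} with a a leaf
      rw [mem_Ehyp] at hSE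
      push_neg at hSE
      obtain ⟨a, ha, b, hb, hab⟩ := hSE hS
      -- identify Sᶜ
      have haS : a ∉ S := mem_compl.mp ha
      obtain ⟨w, hwa, hSw⟩ := Tcompl h2n hS haS
      have hbw : b = w := by
        have : b ∈ ({a, w} : Finset (Fin n))ᶜᶜ := by rw [← hSw]; exact hb
        rw [compl_compl, mem_insert, mem_singleton] at this
        rcases this with rfl|rfl
        · exact absurd rfl (nadj_ne hab)
        · rfl
      subst hbw
      -- WLOG a is the leaf
      have key : ∀ a b : Fin n, S = ({a, b} : Finset (Fin n))ᶜ → nadj a.val b.val →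
          nleaf a.val →
          (∃! Q : Finset (Fin n), Q.card = n - 1 ∧
            ∀ T ⊆ Q, T.card = n - 2 → (T ∈ Ehyp n ∨ T = S)) := by
        clear hab hwa hSw ha haS hb hS
        intro a b hSab hadj hleaf
        have hQcard : (({a} : Finset (Fin n))ᶜ).card = n - 1 := by
          rw [card_compl, Fintype.card_fin, card_singleton]
        refine ⟨({a} : Finset (Fin n))ᶜ, ⟨hQcard, ?_⟩, ?_⟩
        · -- property
          intro T hTsub hTcard
          have haT : a ∉ T := by
            intro haT
            have := hTsub haT
            rw [mem_compl, mem_singleton] at this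
            exact this rfl
          obtain ⟨w, hwa, rfl⟩ := Tcompl h2n hTcard haT
          by_cases hadj' : nadj a.val w.val
          · right
            rw [hSab]
            have : w.val = b.val := leaf_unique hleaf hadj' hadj
            rw [Fin.val_injective this]
          · left
            exact pair_compl_mem_Ehyp hn (Ne.symm hwa) hadj'
        · -- uniqueness
          rintro Q ⟨hQ, hall⟩
          obtain ⟨u, rfl⟩ := Qcompl (by omega) hQ
          -- for every w ≠ u : ¬ nadj u w ∨ {u,w} = {a,b}
          have main : ∀ w : Fin n, w ≠ u → ¬ nadj u.val w.val ∨
              ({u, w} : Finset (Fin n)) = {a, b} := by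
            intro w hwu
            have hsub : ({u, w} : Finset (Fin n))ᶜ ⊆ {u}ᶜ := by
              intro x hx
              rw [mem_compl] at hx ⊢
              simp only [mem_insert, mem_singleton] at hx
              simp only [mem_singleton]
              tauto
            rcases hall _ hsub (pair_compl_card (Ne.symm hwu)) with hE | hES
            · left
              rw [mem_Ehyp] at hE
              refine hE.2 u ?_ w ?_ <;> · rw [compl_compl]; simp
            · right
              rw [hSab] at hES
              have := congrArg (·ᶜ) hES
              simpa using this
          -- u must equal a
          have hua : u = a := by
            by_contra hua
            by_cases hub : u = b
            · subst hub
              -- u = b : the center has a second neighbour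
              obtain ⟨z, hz, hza, hadjz⟩ := center_two hn a.isLt hadj hleaf
              set zf : Fin n := ⟨z, hz⟩
              have hzu : zf ≠ u := by
                intro e
                exact nadj_ne (nadj_comm hadjz) (congrArg Fin.val e)
              rcases main zf hzu with h1 | h1
              · exact h1 hadjz
              · -- {u, zf} = {a, b} forces zf = a
                have : zf ∈ ({a, u} : Finset (Fin n)) := by
                  have hpair := pair_comm a u
                  rw [← h1]; simp
                rw [mem_insert, mem_singleton] at this
                rcases this with rfl|rfl
                · exact hza rfl
                · exact hzu rfl
            · -- u ∉ {a, b} : u has some neighbour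
              obtain ⟨z, hz, hadjz⟩ := exists_nbr hn u.isLt
              set zf : Fin n := ⟨z, hz⟩
              have hzu : zf ≠ u := fun e => nadj_ne (nadj_comm hadjz) (congrArg Fin.val e)
              rcases main zf hzu with h1 | h1
              · exact h1 hadjz
              · have : u ∈ ({a, b} : Finset (Fin n)) := by rw [← h1]; simp
                rw [mem_insert, mem_singleton] at this
                tauto
          rw [hua]
      -- now dispatch by which endpoint is the leaf
      by_cases hleaf : nleaf a.val
      · exact key a b hSw hab hleaf
      · have hleafw : nleaf b.val := by
          by_contra hnb
          exact hleaf ((nadj_leaf_iff hab).mpr hnb)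
        exact key b a (by rw [hSw, pair_comm]) (nadj_comm hab) hleafw
    · -- Primitive
      rintro ⟨v, hv⟩
      by_cases h01 : v.val = 0 ∨ v.val = 1
      · -- use edge {3,4}
        set a : Fin n := ⟨3, by omega⟩
        set b : Fin n := ⟨4, by omega⟩
        have hab : a ≠ b := by
          intro e; have := congrArg Fin.val e; simp [a, b] at this
        have hvS : v ∈ ({a, b} : Finset (Fin n))ᶜ := by
          rw [mem_compl, mem_insert, mem_singleton]
          rintro (rfl|rfl) <;> simp [a, b] at h01
        have hmem := hv _ (pair_compl_card hab) hvS
        rw [mem_Ehyp] at hmem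
        refine hmem.2 a ?_ b ?_ ?_
        · rw [compl_compl]; simp
        · rw [compl_compl]; simp
        · show nadj a.val b.val
          unfold nadj; simp [a, b]
      · -- use edge {0,1}
        set a : Fin n := ⟨0, by omega⟩
        set b : Fin n := ⟨1, by omega⟩
        have hab : a ≠ b := by
          intro e; have := congrArg Fin.val e; simp [a, b] at this
        have hvS : v ∈ ({a, b} : Finset (Fin n))ᶜ := by
          rw [mem_compl, mem_insert, mem_singleton]
          rintro (rfl|rfl) <;> simp [a, b] at h01
        have hmem := hv _ (pair_compl_card hab) hvS
        rw [mem_Ehyp] at hmem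
        refine hmem.2 a ?_ b ?_ ?_
        · rw [compl_compl]; simp
        · rw [compl_compl]; simp
        · show nadj a.val b.val
          unfold nadj; simp [a, b]
  · -- graph part
    refine ⟨⟨fun a b => nadj a.val b.val, ⟨fun a b h => nadj_comm h⟩,
      ⟨fun a h => nadj_ne h rfl⟩⟩, ?_, ?_, ?_⟩
    · intro v
      obtain ⟨z, hz, h⟩ := exists_nbr hn v.isLt
      exact ⟨⟨z, hz⟩, h⟩
    · have hchar : ∀ v : Fin n, (∃! u : Fin n, nadj v.val u.val) ↔ nleaf v.val := by
        intro v
        constructor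
        · rintro ⟨u, hu, huniq⟩
          by_contra hnl
          have hv03 : v.val = 0 ∨ v.val = 3 := by
            unfold nleaf at hnl
            have := v.isLt
            omega
          rcases hv03 with h0 | h3
          · have e1 : (⟨1, by omega⟩ : Fin n) = u :=
              huniq _ (Or.inl ⟨h0, Or.inl rfl⟩)
            have e2 : (⟨2, by omega⟩ : Fin n) = u :=
              huniq _ (Or.inl ⟨h0, Or.inr rfl⟩)
            have := congrArg Fin.val (e1.trans e2.symm)
            simp at this
          · have e1 : (⟨4, by omega⟩ : Fin n) = u :=
              huniq _ (Or.inr (Or.inl ⟨h3, le_refl 4⟩))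
            have e2 : (⟨5, by omega⟩ : Fin n) = u :=
              huniq _ (Or.inr (Or.inl ⟨h3, Nat.le_succ 4⟩))
            have := congrArg Fin.val (e1.trans e2.symm)
            simp at this
        · intro hl
          obtain ⟨z, hz, hadj⟩ := exists_nbr hn v.isLt
          refine ⟨⟨z, hz⟩, hadj, ?_⟩
          intro y hy
          exact Fin.val_injective (leaf_unique hl hy hadj)
      intro v w hvw
      rw [hchar v, hchar w]
      exact nadj_leaf_iff hvw
    · rintro ⟨v, hv⟩
      have h1 : v ∈ s((⟨0, by omega⟩ : Fin n), (⟨1, by omega⟩ : Fin n)) :=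
        hv _ (by show nadj _ _; unfold nadj; simp)
      have h2 : v ∈ s((⟨3, by omega⟩ : Fin n), (⟨4, by omega⟩ : Fin n)) :=
        hv _ (by show nadj _ _; unfold nadj; simp)
      rw [Sym2.mem_iff] at h1 h2
      have hv1 := h1.imp (congrArg Fin.val) (congrArg Fin.val)
      have hv2 := h2.imp (congrArg Fin.val) (congrArg Fin.val)
      simp at hv1 hv2
      omega
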